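/- Let (L,Q) be a definite ternary A-lattice with successive minima (μ₁, μ₂, μ₃) and dual lattice L^♯ = {w : B(w,L) ⊆ A}. Then the successive minima of (L^♯, Q) are (−μ₃, −μ₂, −μ₁). -/

import Mathlib

open Polynomial FunctionField Matrix

set_option linter.unusedSectionVars false
set_option maxHeartbeats 1000000
set_option synthInstance.maxHeartbeats 400000

noncomputable section

variable (Fq : Type) [Field Fq] [Fintype Fq] [DecidableEq (RatFunc Fq)]

/-- The canonical ring homomorphism from `Fq(t)` to its completion at infinity. -/
def toInfty : RatFunc Fq →+* RatFunc.CompletionAtInfty Fq :=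
  letI := RatFunc.inftyValued Fq
  UniformSpace.Completion.coeRingHom

/-- The quadratic form attached to a Gram matrix. -/
def Qval (M : Matrix (Fin 3) (Fin 3) (RatFunc Fq)) (v : Fin 3 → RatFunc Fq) : RatFunc Fq :=
  v ⬝ᵥ (M.mulVec v)

/-- A ternary quadratic lattice (Gram matrix over `K = Fq(t)`) is definite if it is
anisotropic over `Fq((1/t))`. -/
def IsDefinite (M : Matrix (Fin 3) (Fin 3) (RatFunc Fq)) : Prop :=
  ∀ w : Fin 3 → RatFunc.CompletionAtInfty Fq, w ⬝ᵥ ((M.map (toInfty Fq)).mulVec w) = 0 → w = 0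

/-- Degree of a rational function, with `deg 0 = ⊥`. -/
def degK (x : RatFunc Fq) : WithBot ℤ := if x = 0 then ⊥ else (x.intDegree : WithBot ℤ)

/-- The Gram matrix of a reduced basis. -/
def IsReducedGram (M : Matrix (Fin 3) (Fin 3) (RatFunc Fq)) : Prop :=
  M.IsSymm ∧ (∀ i j : Fin 3, i ≤ j → degK Fq (M i i) ≤ degK Fq (M j j)) ∧
    ∀ i j : Fin 3, i < j → degK Fq (M i j) < degK Fq (M i i)

/-- The value of the quadratic form at a vector of the lattice `A³`, `A = Fq[t]`. -/
def QA (M : Matrix (Fin 3) (Fin 3) (RatFunc Fq)) (v : Fin 3 → Polynomial Fq) : RatFunc Fq :=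
  Qval Fq M (fun i => algebraMap (Polynomial Fq) (RatFunc Fq) (v i))

/-- Two ternary lattices are isospectral if they have the same representation numbers. -/
def Isospectral (M M' : Matrix (Fin 3) (Fin 3) (RatFunc Fq)) : Prop :=
  ∀ a : RatFunc Fq, Nat.card {v : Fin 3 → Polynomial Fq // QA Fq M v = a}
    = Nat.card {v : Fin 3 → Polynomial Fq // QA Fq M' v = a}

/-- Two ternary lattices are isometric over `A = Fq[t]`. -/
def IsometricA (M M' : Matrix (Fin 3) (Fin 3) (RatFunc Fq)) : Prop :=
  ∃ U : Matrix (Fin 3) (Fin 3) (Polynomial Fq), IsUnit U.det ∧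
    (U.map (algebraMap (Polynomial Fq) (RatFunc Fq)))ᵀ * M
      * (U.map (algebraMap (Polynomial Fq) (RatFunc Fq))) = M'


/-- Gram matrix of the dual lattice `L^♯` of `(A³, M)` in the dual basis. -/
def dualGram (M : Matrix (Fin 3) (Fin 3) (RatFunc Fq)) : Matrix (Fin 3) (Fin 3) (RatFunc Fq) :=
  Matrix.of fun i j => (4 : RatFunc Fq)⁻¹ * (M⁻¹ i j)

variable {Fq}

namespace DegAux

lemma degK_zero : degK Fq (0 : RatFunc Fq) = ⊥ := if_pos rfl

lemma degK_of_ne {x : RatFunc Fq} (hx : x ≠ 0) : degK Fq x = (x.intDegree : WithBot ℤ) :=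
  if_neg hx

lemma ne_zero_of_degK {x : RatFunc Fq} {n : ℤ} (h : degK Fq x = (n : WithBot ℤ)) : x ≠ 0 := by
  intro h0; rw [h0, degK_zero] at h; exact (WithBot.bot_ne_coe h)

lemma degK_mul (x y : RatFunc Fq) : degK Fq (x * y) = degK Fq x + degK Fq y := by
  rcases eq_or_ne x 0 with rfl | hx
  · simp [degK_zero]
  rcases eq_or_ne y 0 with rfl | hy
  · simp [degK_zero]
  rw [degK_of_ne hx, degK_of_ne hy, degK_of_ne (mul_ne_zero hx hy),
    RatFunc.intDegree_mul hx hy]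
  push_cast; ring

lemma degK_neg (x : RatFunc Fq) : degK Fq (-x) = degK Fq x := by
  unfold degK
  simp [neg_eq_zero, RatFunc.intDegree_neg]

lemma degK_add_le (x y : RatFunc Fq) : degK Fq (x + y) ≤ max (degK Fq x) (degK Fq y) := by
  rcases eq_or_ne x 0 with rfl | hx
  · simp
  rcases eq_or_ne y 0 with rfl | hy
  · simp
  rcases eq_or_ne (x + y) 0 with h0 | hxy
  · rw [h0, degK_zero]; exact bot_le
  rw [degK_of_ne hx, degK_of_ne hy, degK_of_ne hxy]
  have := RatFunc.intDegree_add_le hy hxy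
  rcases le_max_iff.1 this with h | h
  · exact le_max_of_le_left (by exact_mod_cast h)
  · exact le_max_of_le_right (by exact_mod_cast h)

lemma degK_add_lt {x y : RatFunc Fq} {D : WithBot ℤ} (hx : degK Fq x < D) (hy : degK Fq y < D) :
    degK Fq (x + y) < D :=
  (degK_add_le x y).trans_lt (max_lt hx hy)

lemma degK_add_eq_left {x y : RatFunc Fq} (h : degK Fq y < degK Fq x) :
    degK Fq (x + y) = degK Fq x := by
  have h1 : degK Fq (x + y) ≤ degK Fq x :=
    (degK_add_le x y).trans (max_le le_rfl h.le)
  have h3 : degK Fq x ≤ max (degK Fq (x + y)) (degK Fq y) := by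
    have := degK_add_le (x + y) (-y)
    rwa [add_neg_cancel_right, degK_neg] at this
  rcases le_max_iff.1 h3 with h4 | h4
  · exact le_antisymm h1 h4
  · exact absurd h4 (not_le.2 h)

lemma degK_sub_eq_left {x y : RatFunc Fq} (h : degK Fq y < degK Fq x) :
    degK Fq (x - y) = degK Fq x := by
  rw [sub_eq_add_neg]
  exact degK_add_eq_left (by rwa [degK_neg])

lemma wb_lt_lt {u v : WithBot ℤ} {n m : ℤ} (hu : u < (n : WithBot ℤ)) (hv : v < (m : WithBot ℤ)) :
    u + v < ((n + m : ℤ) : WithBot ℤ) := by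
  rcases eq_or_ne u ⊥ with rfl | hu'
  · rw [WithBot.bot_add]; exact WithBot.bot_lt_coe _
  rcases eq_or_ne v ⊥ with rfl | hv'
  · rw [WithBot.add_bot]; exact WithBot.bot_lt_coe _
  lift u to ℤ using hu'
  lift v to ℤ using hv'
  rw [← WithBot.coe_add]
  exact WithBot.coe_lt_coe.2 (add_lt_add (WithBot.coe_lt_coe.1 hu) (WithBot.coe_lt_coe.1 hv))

lemma wb_le_lt {u v : WithBot ℤ} {n m : ℤ} (hu : u ≤ (n : WithBot ℤ)) (hv : v < (m : WithBot ℤ)) :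
    u + v < ((n + m : ℤ) : WithBot ℤ) := by
  rcases eq_or_ne u ⊥ with rfl | hu'
  · rw [WithBot.bot_add]; exact WithBot.bot_lt_coe _
  rcases eq_or_ne v ⊥ with rfl | hv'
  · rw [WithBot.add_bot]; exact WithBot.bot_lt_coe _
  lift u to ℤ using hu'
  lift v to ℤ using hv'
  rw [← WithBot.coe_add]
  exact WithBot.coe_lt_coe.2
    (add_lt_add_of_le_of_lt (WithBot.coe_le_coe.1 hu) (WithBot.coe_lt_coe.1 hv))

lemma wb_lt_le {u v : WithBot ℤ} {n m : ℤ} (hu : u < (n : WithBot ℤ)) (hv : v ≤ (m : WithBot ℤ)) :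
    u + v < ((n + m : ℤ) : WithBot ℤ) := by
  rcases eq_or_ne u ⊥ with rfl | hu'
  · rw [WithBot.bot_add]; exact WithBot.bot_lt_coe _
  rcases eq_or_ne v ⊥ with rfl | hv'
  · rw [WithBot.add_bot]; exact WithBot.bot_lt_coe _
  lift u to ℤ using hu'
  lift v to ℤ using hv'
  rw [← WithBot.coe_add]
  exact WithBot.coe_lt_coe.2
    (add_lt_add_of_lt_of_le (WithBot.coe_lt_coe.1 hu) (WithBot.coe_le_coe.1 hv))

lemma intDegree_inv {x : RatFunc Fq} (hx : x ≠ 0) : x⁻¹.intDegree = -x.intDegree := by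
  have h := RatFunc.intDegree_mul (inv_ne_zero hx) hx
  rw [inv_mul_cancel₀ hx, RatFunc.intDegree_one] at h
  linarith

lemma diag_ne_zero {M : Matrix (Fin 3) (Fin 3) (RatFunc Fq)} (hdef : IsDefinite Fq M)
    (i : Fin 3) : M i i ≠ 0 := by
  intro h0
  have h1 : (Pi.single i (1 : RatFunc.CompletionAtInfty Fq)) ⬝ᵥ
      ((M.map (toInfty Fq)).mulVec (Pi.single i 1)) = 0 := by
    rw [Matrix.mulVec_single, single_dotProduct]
    simp [Matrix.map_apply, h0]
  have h2 := congrFun (hdef _ h1) i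
  simp at h2

end DegAux

open DegAux

theorem fourNeZeroAux (hodd : Odd (Fintype.card Fq)) : (4 : RatFunc Fq) ≠ 0 := by
  have hchar : ringChar Fq ≠ 2 := by
    intro h
    have h2 := FiniteField.even_card_of_char_two h
    have h1 := Nat.odd_iff.1 hodd
    omega
  have h2 : (2 : Fq) ≠ 0 := Ring.two_ne_zero hchar
  have h4q : (4 : Fq) ≠ 0 := by
    have h44 : (4 : Fq) = 2 * 2 := by norm_num
    rw [h44]; exact mul_ne_zero h2 h2
  have hC : (4 : RatFunc Fq) = RatFunc.C (4 : Fq) := (map_ofNat RatFunc.C 4).symm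
  rw [hC]
  simpa using h4q

variable (Fq)

/-- The dual lattice `L^♯` of `(A³, M)` has Gram matrix `¼ M⁻¹` in the dual basis; its
successive minima are `(-μ₃, -μ₂, -μ₁)`: there is a change of basis over `A` making
`¼ M⁻¹` reduced with diagonal degrees `-μ₃, -μ₂, -μ₁`. -/
theorem stmt_8 (hodd : Odd (Fintype.card Fq))
    (M : Matrix (Fin 3) (Fin 3) (RatFunc Fq))
    (hdef : IsDefinite Fq M) (hred : IsReducedGram Fq M) :
    ∃ U : Matrix (Fin 3) (Fin 3) (Polynomial Fq), IsUnit U.det ∧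
      IsReducedGram Fq
        ((U.map (algebraMap (Polynomial Fq) (RatFunc Fq)))ᵀ * dualGram Fq M
          * (U.map (algebraMap (Polynomial Fq) (RatFunc Fq)))) ∧
      ∀ i : Fin 3,
        (((U.map (algebraMap (Polynomial Fq) (RatFunc Fq)))ᵀ * dualGram Fq M
          * (U.map (algebraMap (Polynomial Fq) (RatFunc Fq)))) i i).intDegree
          = -((M (2 - i) (2 - i)).intDegree) := by
  obtain ⟨hsym, hmono, hoff⟩ := hred
  have h10 : M 1 0 = M 0 1 := hsym.apply 0 1
  have h20 : M 2 0 = M 0 2 := hsym.apply 0 2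
  have h21 : M 2 1 = M 1 2 := hsym.apply 1 2
  have ha : M 0 0 ≠ 0 := diag_ne_zero hdef 0
  have hb : M 1 1 ≠ 0 := diag_ne_zero hdef 1
  have hc : M 2 2 ≠ 0 := diag_ne_zero hdef 2
  set da := (M 0 0).intDegree with hda
  set db := (M 1 1).intDegree with hdb
  set dc := (M 2 2).intDegree with hdc
  have Da : degK Fq (M 0 0) = (da : WithBot ℤ) := degK_of_ne ha
  have Db : degK Fq (M 1 1) = (db : WithBot ℤ) := degK_of_ne hb
  have Dc : degK Fq (M 2 2) = (dc : WithBot ℤ) := degK_of_ne hc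
  have hab : da ≤ db := by
    have h := hmono 0 1 (by decide); rw [Da, Db] at h; exact_mod_cast h
  have hbc : db ≤ dc := by
    have h := hmono 1 2 (by decide); rw [Db, Dc] at h; exact_mod_cast h
  have hp : degK Fq (M 0 1) < (da : WithBot ℤ) := by
    have h := hoff 0 1 (by decide); rwa [Da] at h
  have hq : degK Fq (M 0 2) < (da : WithBot ℤ) := by
    have h := hoff 0 2 (by decide); rwa [Da] at h
  have hr : degK Fq (M 1 2) < (db : WithBot ℤ) := by
    have h := hoff 1 2 (by decide); rwa [Db] at h
  -- 4 is invertible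
  have h4 : (4 : RatFunc Fq) ≠ 0 := fourNeZeroAux hodd
  have hdeg4inv : degK Fq ((4 : RatFunc Fq)⁻¹) = ((0 : ℤ) : WithBot ℤ) := by
    rw [degK_of_ne (inv_ne_zero h4), intDegree_inv h4,
      (map_ofNat RatFunc.C 4).symm, RatFunc.intDegree_C]
    norm_num
  -- determinant
  have habc : degK Fq (M 0 0 * M 1 1 * M 2 2) = ((da + db + dc : ℤ) : WithBot ℤ) := by
    rw [degK_mul, degK_mul, Da, Db, Dc, ← WithBot.coe_add, ← WithBot.coe_add]
  have t1 : degK Fq (M 0 0 * M 1 2 * M 1 2) < ((da + db + dc : ℤ) : WithBot ℤ) := by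
    rw [degK_mul, degK_mul]
    exact wb_lt_le (wb_le_lt Da.le hr) (hr.le.trans (WithBot.coe_le_coe.2 hbc))
  have t2 : degK Fq (M 0 1 * M 0 1 * M 2 2) < ((da + db + dc : ℤ) : WithBot ℤ) := by
    rw [degK_mul, degK_mul]
    exact (wb_lt_le (wb_lt_lt hp hp) Dc.le).trans_le (WithBot.coe_le_coe.2 (by linarith))
  have t3 : degK Fq (M 0 1 * M 1 2 * M 0 2) < ((da + db + dc : ℤ) : WithBot ℤ) := by
    rw [degK_mul, degK_mul]
    exact (wb_lt_le (wb_lt_lt hp hr) hq.le).trans_le (WithBot.coe_le_coe.2 (by linarith))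
  have t4 : degK Fq (M 0 2 * M 0 1 * M 1 2) < ((da + db + dc : ℤ) : WithBot ℤ) := by
    rw [degK_mul, degK_mul]
    exact (wb_lt_le (wb_lt_lt hq hp) hr.le).trans_le (WithBot.coe_le_coe.2 (by linarith))
  have t5 : degK Fq (M 0 2 * M 1 1 * M 0 2) < ((da + db + dc : ℤ) : WithBot ℤ) := by
    rw [degK_mul, degK_mul]
    exact (wb_lt_le (wb_lt_le hq Db.le) hq.le).trans_le (WithBot.coe_le_coe.2 (by linarith))
  have hdetexp : M.det = M 0 0 * M 1 1 * M 2 2 +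
      (-(M 0 0 * M 1 2 * M 1 2) + (-(M 0 1 * M 0 1 * M 2 2) +
        (M 0 1 * M 1 2 * M 0 2 + (M 0 2 * M 0 1 * M 1 2 + -(M 0 2 * M 1 1 * M 0 2))))) := by
    rw [Matrix.det_fin_three, h10, h20, h21]; ring
  have hdet : degK Fq M.det = ((da + db + dc : ℤ) : WithBot ℤ) := by
    rw [hdetexp, degK_add_eq_left, habc]
    rw [habc]
    apply degK_add_lt
    · rw [degK_neg]; exact t1
    apply degK_add_lt
    · rw [degK_neg]; exact t2
    apply degK_add_lt t3
    apply degK_add_lt t4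
    rw [degK_neg]; exact t5
  have hdet0 : M.det ≠ 0 := ne_zero_of_degK hdet
  have hdetint : M.det.intDegree = da + db + dc := by
    have h := hdet; rw [degK_of_ne hdet0] at h; exact_mod_cast h
  have hs : degK Fq ((4 : RatFunc Fq)⁻¹ * (M.det)⁻¹) =
      ((-(da + db + dc) : ℤ) : WithBot ℤ) := by
    rw [degK_mul, hdeg4inv, degK_of_ne (inv_ne_zero hdet0), intDegree_inv hdet0, hdetint,
      ← WithBot.coe_add]
    norm_num
  -- adjugate entries
  have hadj := Matrix.adjugate_fin_three M
  have e00 : M.adjugate 0 0 = M 1 1 * M 2 2 - M 1 2 * M 1 2 := by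
    rw [hadj, h21]; simp
  have e11 : M.adjugate 1 1 = M 0 0 * M 2 2 - M 0 2 * M 0 2 := by
    rw [hadj, h20]; simp
  have e22 : M.adjugate 2 2 = M 0 0 * M 1 1 - M 0 1 * M 0 1 := by
    rw [hadj, h10]; simp
  have e21 : M.adjugate 2 1 = -(M 0 0 * M 1 2) + M 0 1 * M 0 2 := by
    rw [hadj, h20, h21]; simp
  have e20 : M.adjugate 2 0 = M 0 1 * M 1 2 - M 1 1 * M 0 2 := by
    rw [hadj, h10, h20, h21]; simp
  have e10 : M.adjugate 1 0 = -(M 0 1 * M 2 2) + M 1 2 * M 0 2 := by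
    rw [hadj, h10, h20]; simp
  -- degK of adjugate entries
  have hBC : degK Fq (M 1 1 * M 2 2) = ((db + dc : ℤ) : WithBot ℤ) := by
    rw [degK_mul, Db, Dc, ← WithBot.coe_add]
  have hAC : degK Fq (M 0 0 * M 2 2) = ((da + dc : ℤ) : WithBot ℤ) := by
    rw [degK_mul, Da, Dc, ← WithBot.coe_add]
  have hAB : degK Fq (M 0 0 * M 1 1) = ((da + db : ℤ) : WithBot ℤ) := by
    rw [degK_mul, Da, Db, ← WithBot.coe_add]
  have g00 : degK Fq (M.adjugate 0 0) = ((db + dc : ℤ) : WithBot ℤ) := by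
    rw [e00, degK_sub_eq_left, hBC]
    rw [hBC, degK_mul]
    exact (wb_lt_lt hr hr).trans_le (WithBot.coe_le_coe.2 (by linarith))
  have g11 : degK Fq (M.adjugate 1 1) = ((da + dc : ℤ) : WithBot ℤ) := by
    rw [e11, degK_sub_eq_left, hAC]
    rw [hAC, degK_mul]
    exact (wb_lt_lt hq hq).trans_le (WithBot.coe_le_coe.2 (by linarith))
  have g22 : degK Fq (M.adjugate 2 2) = ((da + db : ℤ) : WithBot ℤ) := by
    rw [e22, degK_sub_eq_left, hAB]
    rw [hAB, degK_mul]
    exact (wb_lt_lt hp hp).trans_le (WithBot.coe_le_coe.2 (by linarith))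
  have g21 : degK Fq (M.adjugate 2 1) < ((da + db : ℤ) : WithBot ℤ) := by
    rw [e21]
    apply degK_add_lt
    · rw [degK_neg, degK_mul]; exact wb_le_lt Da.le hr
    · rw [degK_mul]
      exact (wb_lt_lt hp hq).trans_le (WithBot.coe_le_coe.2 (by linarith))
  have g20 : degK Fq (M.adjugate 2 0) < ((da + db : ℤ) : WithBot ℤ) := by
    rw [e20, sub_eq_add_neg]
    apply degK_add_lt
    · rw [degK_mul]; exact wb_lt_lt hp hr
    · rw [degK_neg, degK_mul]
      exact (wb_le_lt Db.le hq).trans_le (WithBot.coe_le_coe.2 (by linarith))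
  have g10 : degK Fq (M.adjugate 1 0) < ((da + dc : ℤ) : WithBot ℤ) := by
    rw [e10]
    apply degK_add_lt
    · rw [degK_neg, degK_mul]; exact wb_lt_le hp Dc.le
    · rw [degK_mul]
      exact (wb_lt_lt hr hq).trans_le (WithBot.coe_le_coe.2 (by linarith))
  -- dual gram entries
  have hDval : ∀ i j : Fin 3, dualGram Fq M i j =
      ((4 : RatFunc Fq)⁻¹ * (M.det)⁻¹) * M.adjugate i j := by
    intro i j
    show (4 : RatFunc Fq)⁻¹ * M⁻¹ i j = _
    rw [Matrix.inv_def, Matrix.smul_apply, smul_eq_mul, Ring.inverse_eq_inv, mul_assoc]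
  have hD22 : degK Fq (dualGram Fq M 2 2) = ((-dc : ℤ) : WithBot ℤ) := by
    rw [hDval, degK_mul, hs, g22, ← WithBot.coe_add]
    congr 1; ring
  have hD11 : degK Fq (dualGram Fq M 1 1) = ((-db : ℤ) : WithBot ℤ) := by
    rw [hDval, degK_mul, hs, g11, ← WithBot.coe_add]
    congr 1; ring
  have hD00 : degK Fq (dualGram Fq M 0 0) = ((-da : ℤ) : WithBot ℤ) := by
    rw [hDval, degK_mul, hs, g00, ← WithBot.coe_add]
    congr 1; ring
  have hD21 : degK Fq (dualGram Fq M 2 1) < ((-dc : ℤ) : WithBot ℤ) := by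
    rw [hDval, degK_mul, hs]
    exact (wb_le_lt le_rfl g21).trans_le (WithBot.coe_le_coe.2 (by linarith))
  have hD20 : degK Fq (dualGram Fq M 2 0) < ((-dc : ℤ) : WithBot ℤ) := by
    rw [hDval, degK_mul, hs]
    exact (wb_le_lt le_rfl g20).trans_le (WithBot.coe_le_coe.2 (by linarith))
  have hD10 : degK Fq (dualGram Fq M 1 0) < ((-db : ℤ) : WithBot ℤ) := by
    rw [hDval, degK_mul, hs]
    exact (wb_le_lt le_rfl g10).trans_le (WithBot.coe_le_coe.2 (by linarith))
  -- symmetry of the dual gram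
  have hDsym : ∀ i j : Fin 3, dualGram Fq M i j = dualGram Fq M j i := by
    have hMinv : (M⁻¹)ᵀ = M⁻¹ := by rw [Matrix.transpose_nonsing_inv, hsym.eq]
    intro i j
    show (4 : RatFunc Fq)⁻¹ * M⁻¹ i j = (4 : RatFunc Fq)⁻¹ * M⁻¹ j i
    have := congrFun (congrFun hMinv j) i
    rw [Matrix.transpose_apply] at this
    rw [this]
  -- the change of basis
  have hUq : (!![0,0,1;0,1,0;1,0,0] : Matrix (Fin 3) (Fin 3) (Polynomial Fq)).map
      (algebraMap (Polynomial Fq) (RatFunc Fq)) = !![(0:RatFunc Fq),0,1;0,1,0;1,0,0] := by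
    ext i j
    fin_cases i <;> fin_cases j <;>
      simp [Matrix.map_apply, Matrix.vecHead, Matrix.vecTail]
  have hUqT : (!![(0:RatFunc Fq),0,1;0,1,0;1,0,0])ᵀ = !![(0:RatFunc Fq),0,1;0,1,0;1,0,0] := by
    ext i j
    fin_cases i <;> fin_cases j <;> simp
  have hNmat : (!![(0:RatFunc Fq),0,1;0,1,0;1,0,0])ᵀ * dualGram Fq M
      * !![(0:RatFunc Fq),0,1;0,1,0;1,0,0] =
      !![dualGram Fq M 2 2, dualGram Fq M 2 1, dualGram Fq M 2 0;
         dualGram Fq M 1 2, dualGram Fq M 1 1, dualGram Fq M 1 0;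
         dualGram Fq M 0 2, dualGram Fq M 0 1, dualGram Fq M 0 0] := by
    rw [hUqT]
    ext i j
    fin_cases i <;> fin_cases j <;>
      simp [Matrix.mul_apply, Matrix.vecMul, dotProduct, Fin.sum_univ_three,
        Matrix.vecHead, Matrix.vecTail]
  refine ⟨!![0,0,1;0,1,0;1,0,0], ?_, ?_, ?_⟩
  · have hdU : (!![0,0,1;0,1,0;1,0,0] : Matrix (Fin 3) (Fin 3) (Polynomial Fq)).det = -1 := by
      simp [Matrix.det_fin_three]
    rw [hdU]; exact isUnit_one.neg
  · rw [hUq, hNmat]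
    refine ⟨?_, ?_, ?_⟩
    · apply Matrix.IsSymm.ext
      intro i j
      fin_cases i <;> fin_cases j
      · rfl
      · show dualGram Fq M 1 2 = dualGram Fq M 2 1; exact hDsym 1 2
      · show dualGram Fq M 0 2 = dualGram Fq M 2 0; exact hDsym 0 2
      · show dualGram Fq M 2 1 = dualGram Fq M 1 2; exact hDsym 2 1
      · rfl
      · show dualGram Fq M 0 1 = dualGram Fq M 1 0; exact hDsym 0 1
      · show dualGram Fq M 2 0 = dualGram Fq M 0 2; exact hDsym 2 0
      · show dualGram Fq M 1 0 = dualGram Fq M 0 1; exact hDsym 1 0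
      · rfl
    · intro i j hij
      fin_cases i <;> fin_cases j
      · exact le_rfl
      · show degK Fq (dualGram Fq M 2 2) ≤ degK Fq (dualGram Fq M 1 1)
        rw [hD22, hD11]; exact WithBot.coe_le_coe.2 (by linarith)
      · show degK Fq (dualGram Fq M 2 2) ≤ degK Fq (dualGram Fq M 0 0)
        rw [hD22, hD00]; exact WithBot.coe_le_coe.2 (by linarith)
      · exact absurd hij (by decide)
      · exact le_rfl
      · show degK Fq (dualGram Fq M 1 1) ≤ degK Fq (dualGram Fq M 0 0)
        rw [hD11, hD00]; exact WithBot.coe_le_coe.2 (by linarith)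
      · exact absurd hij (by decide)
      · exact absurd hij (by decide)
      · exact le_rfl
    · intro i j hij
      fin_cases i <;> fin_cases j
      · exact absurd hij (by decide)
      · show degK Fq (dualGram Fq M 2 1) < degK Fq (dualGram Fq M 2 2)
        rw [hD22]; exact hD21
      · show degK Fq (dualGram Fq M 2 0) < degK Fq (dualGram Fq M 2 2)
        rw [hD22]; exact hD20
      · exact absurd hij (by decide)
      · exact absurd hij (by decide)
      · show degK Fq (dualGram Fq M 1 0) < degK Fq (dualGram Fq M 1 1)
        rw [hD11]; exact hD10
      · exact absurd hij (by decide)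
      · exact absurd hij (by decide)
      · exact absurd hij (by decide)
  · rw [hUq, hNmat]
    intro i
    fin_cases i
    · show (dualGram Fq M 2 2).intDegree = -dc
      have hne : dualGram Fq M 2 2 ≠ 0 := ne_zero_of_degK hD22
      have h := hD22; rw [degK_of_ne hne] at h
      exact_mod_cast h
    · show (dualGram Fq M 1 1).intDegree = -db
      have hne : dualGram Fq M 1 1 ≠ 0 := ne_zero_of_degK hD11
      have h := hD11; rw [degK_of_ne hne] at h
      exact_mod_cast h
    · show (dualGram Fq M 0 0).intDegree = -da
      have hne : dualGram Fq M 0 0 ≠ 0 := ne_zero_of_degK hD00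
      have h := hD00; rw [degK_of_ne hne] at h
      exact_mod_cast h


end
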